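/- Let 0 < ι < 1/2, let P be a (u,ι)-parallelogram with center (x_P,y_P), scale c_P and slopes ũ_x, ũ_y, and let P' be the open parallelogram obtained by shrinking P by a factor 1−2ι in both defining inequalities. If (x₁,y₁) ≤ (x₂,y₂) coordinatewise, (x₁,y₁) ∈ P', and (x₂,y₂) lies on the boundary of P, then (x₂,y₂) lies on the northeast boundary: ũ_x(x₂−x_P) + ũ_y(y₂−y_P) = ι c_P. -/
import Mathlib


/-- Let `P` be a `(u,ι)`-parallelogram and `P'` its shrinking by the factor
`1 − 2ι` in both defining inequalities. If `(x₁,y₁) ≤ (x₂,y₂)` coordinatewise, `(x₁,y₁) ∈ P'`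
and `(x₂,y₂)` lies on the boundary of `P`, then `(x₂,y₂)` lies on the northeast boundary:
`ux(x₂−xP) + uy(y₂−yP) = ι·c`. -/
theorem stmt11 (ι c ux uy xP yP x1 y1 x2 y2 : ℝ)
    (hι : 0 < ι) (hι2 : ι < 1/2) (hc : 0 < c) (hux : 0 < ux) (huy : 0 < uy)
    (hP'1 : |ux * (x1 - xP) + uy * (y1 - yP)| < (1 - 2*ι) * ι * c)
    (hP'2 : |ux * (x1 - xP) - uy * (y1 - yP)| < (1 - 2*ι) * c)
    (hx : x1 ≤ x2) (hy : y1 ≤ y2)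
    (hmem1 : |ux * (x2 - xP) + uy * (y2 - yP)| ≤ ι * c)
    (hmem2 : |ux * (x2 - xP) - uy * (y2 - yP)| ≤ c)
    (hbound : |ux * (x2 - xP) + uy * (y2 - yP)| = ι * c ∨
      |ux * (x2 - xP) - uy * (y2 - yP)| = c) :
    ux * (x2 - xP) + uy * (y2 - yP) = ι * c := by
  rw [abs_lt] at hP'1 hP'2
  rw [abs_le] at hmem1 hmem2
  obtain ⟨hP'1a, hP'1b⟩ := hP'1
  obtain ⟨hP'2a, hP'2b⟩ := hP'2
  have hdx : 0 ≤ ux * (x2 - x1) := mul_nonneg hux.le (by linarith)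
  have hdy : 0 ≤ uy * (y2 - y1) := mul_nonneg huy.le (by linarith)
  rcases hbound with h | h
  · rcases (abs_eq (by positivity)).mp h with h' | h'
    · exact h'
    · exfalso; nlinarith [hmem1.1, hmem1.2]
  · rcases (abs_eq hc.le).mp h with h' | h'
    · exfalso; nlinarith [hmem1.1, hmem1.2, mul_pos hι hc]
    · exfalso; nlinarith [hmem1.1, hmem1.2, mul_pos hι hc]
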